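/- For every Boolean function f : {0,1}^n → {0,1} with s_0(f) = 1, the tree sensitivity of f equals its sensitivity: ts(f) = s(f). -/

import Mathlib

/-- Flip the bits of `x` in the block `B`. -/
def flipB {n : ℕ} (x : Fin n → Bool) (B : Finset (Fin n)) : Fin n → Bool :=
  fun i => if i ∈ B then !(x i) else x i

lemma flipB_flipB {n : ℕ} (x : Fin n → Bool) (B : Finset (Fin n)) :
    flipB (flipB x B) B = x := by
  funext i
  by_cases h : i ∈ B <;> simp [flipB, h]

/-- The sensitivity graph of `f`: the subgraph of the hypercube keeping the
edges `{x, x^i}` with `f(x) ≠ f(x^i)`. -/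
def sensGraph {n : ℕ} (f : (Fin n → Bool) → Bool) :
    SimpleGraph (Fin n → Bool) where
  Adj x y := f x ≠ f y ∧ ∃ i : Fin n, y = flipB x {i}
  symm := by
    constructor
    rintro x y ⟨hf, i, rfl⟩
    exact ⟨hf.symm, i, (flipB_flipB x {i}).symm⟩
  loopless := by
    constructor
    rintro x ⟨hf, -⟩
    exact hf rfl

/-- Tree sensitivity of `f`: the maximum number of vertices of a subtree of the
sensitivity graph using at most one edge in each coordinate direction. -/
noncomputable def tsF {n : ℕ} (f : (Fin n → Bool) → Bool) : ℕ :=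
  sSup {m : ℕ | ∃ H : (sensGraph f).Subgraph,
    m = H.verts.ncard ∧ H.coe.IsTree ∧
    ∀ i : Fin n, ∀ x y : Fin n → Bool,
      H.Adj x (flipB x {i}) → H.Adj y (flipB y {i}) →
      x = y ∨ x = flipB y {i}}

/-- Sensitivity of `f`, measured as the size of the largest sensitive star:
`max_x (1 + number of sensitive coordinates of x)`. -/
noncomputable def sStar {n : ℕ} (f : (Fin n → Bool) → Bool) : ℕ :=
  sSup {m : ℕ | ∃ x : Fin n → Bool,
    m = 1 + (Finset.univ.filter fun i : Fin n => f (flipB x {i}) ≠ f x).card}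

/-- 0-sensitivity of `f`. -/
noncomputable def s0F {n : ℕ} (f : (Fin n → Bool) → Bool) : ℕ :=
  sSup {m : ℕ | ∃ x : Fin n → Bool, f x = false ∧
    m = (Finset.univ.filter fun i : Fin n => f (flipB x {i}) ≠ f x).card}

lemma flipB_ne_self {n : ℕ} (x : Fin n → Bool) (i : Fin n) : flipB x {i} ≠ x := by
  intro hh
  have := congrFun hh i
  simp [flipB] at this

lemma flipB_inj {n : ℕ} (x : Fin n → Bool) {i j : Fin n}
    (hh : flipB x {i} = flipB x {j}) : i = j := by
  by_contra hij
  have := congrFun hh i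
  simp [flipB, hij] at this

abbrev sensSet {n : ℕ} (f : (Fin n → Bool) → Bool) (x : Fin n → Bool) : Finset (Fin n) :=
  Finset.univ.filter fun i : Fin n => f (flipB x {i}) ≠ f x

lemma s0_card_le {n : ℕ} (f : (Fin n → Bool) → Bool) (h : s0F f = 1)
    (x : Fin n → Bool) (hx : f x = false) : (sensSet f x).card ≤ 1 := by
  have hb : BddAbove {m : ℕ | ∃ x : Fin n → Bool, f x = false ∧
      m = (Finset.univ.filter fun i : Fin n => f (flipB x {i}) ≠ f x).card} := by
    refine ⟨n, ?_⟩
    rintro m ⟨y, -, rfl⟩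
    simpa using Finset.card_le_univ (sensSet f y)
  have hm : (sensSet f x).card ∈ {m : ℕ | ∃ x : Fin n → Bool, f x = false ∧
      m = (Finset.univ.filter fun i : Fin n => f (flipB x {i}) ≠ f x).card} := ⟨x, hx, rfl⟩
  have := le_csSup hb hm
  rwa [show sSup _ = s0F f from rfl, h] at this

lemma sens_unique {n : ℕ} (f : (Fin n → Bool) → Bool) (h : s0F f = 1)
    (x : Fin n → Bool) (hx : f x = false) {i j : Fin n}
    (hi : f (flipB x {i}) ≠ f x) (hj : f (flipB x {j}) ≠ f x) : i = j := by
  have hc := s0_card_le f h x hx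
  have hi' : i ∈ sensSet f x := by simp [sensSet, hi]
  have hj' : j ∈ sensSet f x := by simp [sensSet, hj]
  exact Finset.card_le_one.mp hc _ hi' _ hj'

lemma acyclic_of_star {V : Type*} {G : SimpleGraph V} (c : V)
    (hG : ∀ a b : V, G.Adj a b → a = c ∨ b = c) : G.IsAcyclic := by
  intro v p hp
  have h3 := hp.three_le_length
  match p with
  | .nil => simp at h3
  | .cons h₁ .nil => simp at h3
  | .cons h₁ (.cons h₂ .nil) => simp [SimpleGraph.Walk.length_cons] at h3
  | @SimpleGraph.Walk.cons _ _ _ v₁ _ h₁ (@SimpleGraph.Walk.cons _ _ _ v₂ _ h₂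
      (@SimpleGraph.Walk.cons _ _ _ v₃ _ h₃ rest)) =>
    have hnd := hp.support_nodup
    simp only [SimpleGraph.Walk.support_cons, List.tail_cons, List.nodup_cons] at hnd
    obtain ⟨hv₁, hv₂, hnd'⟩ := hnd
    rcases hG _ _ h₁ with rfl | rfl
    · rcases hG _ _ h₂ with rfl | rfl
      · exact h₁.ne rfl
      · -- v₂ = v = c, but v is endpoint of rest, so v ∈ v₃ :: rest.support
        exact hv₂ (by simpa using rest.end_mem_support)
    · rcases hG _ _ h₃ with rfl | rfl
      · exact h₂.ne rfl
      · -- v₃ = v₁, but v₃ ∈ rest.support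
        exact hv₁ (List.mem_cons.mpr (Or.inr rest.start_mem_support))


/-- The star subgraph of the sensitivity graph centred at `x`. -/
def starSub {n : ℕ} (f : (Fin n → Bool) → Bool) (x : Fin n → Bool) :
    (sensGraph f).Subgraph where
  verts := ↑(insert x ((sensSet f x).image fun i => flipB x {i}))
  Adj a b := (a = x ∧ ∃ i, f (flipB x {i}) ≠ f x ∧ b = flipB x {i}) ∨
             (b = x ∧ ∃ i, f (flipB x {i}) ≠ f x ∧ a = flipB x {i})
  adj_sub := by
    rintro a b (⟨rfl, i, hi, rfl⟩ | ⟨rfl, i, hi, rfl⟩)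
    · exact ⟨hi.symm, i, rfl⟩
    · exact ⟨hi, i, (flipB_flipB _ {i}).symm⟩
  edge_vert := by
    rintro a b (⟨rfl, i, hi, rfl⟩ | ⟨rfl, i, hi, rfl⟩)
    · simp
    · simp only [Finset.coe_insert, Set.mem_insert_iff, Finset.coe_image, Set.mem_image]
      right
      exact ⟨i, by simp [hi], rfl⟩
  symm := by
    constructor
    rintro a b (h | h)
    · exact Or.inr h
    · exact Or.inl h

lemma starSub_ncard {n : ℕ} (f : (Fin n → Bool) → Bool) (x : Fin n → Bool) :
    (starSub f x).verts.ncard = 1 + (sensSet f x).card := by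
  have h1 : (starSub f x).verts = ↑(insert x ((sensSet f x).image fun i => flipB x {i})) := rfl
  rw [h1, Set.ncard_coe_finset]
  rw [Finset.card_insert_of_notMem, Finset.card_image_of_injOn, add_comm]
  · intro i _ j _ hij
    exact flipB_inj x hij
  · intro hmem
    simp only [Finset.mem_image] at hmem
    obtain ⟨i, -, hi⟩ := hmem
    exact flipB_ne_self x i hi

lemma starSub_isTree {n : ℕ} (f : (Fin n → Bool) → Bool) (x : Fin n → Bool) :
    (starSub f x).coe.IsTree := by
  have hx : x ∈ (starSub f x).verts := by
    simp [starSub]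
  have hadj : ∀ u : (starSub f x).verts, u ≠ ⟨x, hx⟩ → (starSub f x).coe.Adj ⟨x, hx⟩ u := by
    rintro ⟨u, hu⟩ hne
    have hu' : u = x ∨ ∃ i ∈ sensSet f x, flipB x {i} = u := by
      simpa [starSub] using hu
    rcases hu' with rfl | ⟨i, hi, rfl⟩
    · exact (hne rfl).elim
    · refine Or.inl ⟨rfl, i, ?_, rfl⟩
      simpa using hi
  have hreach : ∀ u : (starSub f x).verts, (starSub f x).coe.Reachable ⟨x, hx⟩ u := by
    intro u
    by_cases hu : u = ⟨x, hx⟩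
    · rw [hu]
    · exact (hadj u hu).reachable
  refine ⟨?_, ?_⟩
  · rw [SimpleGraph.connected_iff]
    exact ⟨fun u v => (hreach u).symm.trans (hreach v), ⟨⟨x, hx⟩⟩⟩
  · apply acyclic_of_star (⟨x, hx⟩ : (starSub f x).verts)
    rintro ⟨a, ha⟩ ⟨b, hb⟩ hab
    rcases hab with ⟨ha', -⟩ | ⟨hb', -⟩
    · exact Or.inl (Subtype.ext ha')
    · exact Or.inr (Subtype.ext hb')

lemma walk_closure {V : Type*} {G : SimpleGraph V} (P : V → Prop)
    (hstep : ∀ a b : V, G.Adj a b → P a → P b) :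
    ∀ {u v : V}, G.Walk u v → P u → P v := by
  intro u v p
  induction p with
  | nil => exact id
  | cons hadj q ih => exact fun hu => ih (hstep _ _ hadj hu)

lemma starSub_dir {n : ℕ} (f : (Fin n → Bool) → Bool) (x : Fin n → Bool) :
    ∀ i : Fin n, ∀ a b : Fin n → Bool,
      (starSub f x).Adj a (flipB a {i}) → (starSub f x).Adj b (flipB b {i}) →
      a = b ∨ a = flipB b {i} := by
  have key : ∀ (i : Fin n) (a : Fin n → Bool),
      (starSub f x).Adj a (flipB a {i}) → a = x ∨ a = flipB x {i} := by
    intro i a hadj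
    rcases hadj with ⟨rfl, j, hj, hfl⟩ | ⟨hfl, j, hj, ha⟩
    · exact Or.inl rfl
    · right
      have h1 : flipB a {j} = x := by rw [ha, flipB_flipB]
      have h2 : flipB a {i} = flipB a {j} := by rw [hfl, h1]
      rw [ha, flipB_inj a h2]
  intro i a b ha hb
  rcases key i a ha with rfl | rfl <;> rcases key i b hb with h | h
  · exact Or.inl h.symm
  · exact Or.inr (by rw [h, flipB_flipB])
  · exact Or.inr (by rw [h])
  · exact Or.inl (by rw [h])


theorem treeSensitivity_eq_sensitivity_of_s0_eq_one {n : ℕ}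
    (f : (Fin n → Bool) → Bool) (h : s0F f = 1) :
    tsF f = sStar f := by
  classical
  set S := {m : ℕ | ∃ H : (sensGraph f).Subgraph,
    m = H.verts.ncard ∧ H.coe.IsTree ∧
    ∀ i : Fin n, ∀ x y : Fin n → Bool,
      H.Adj x (flipB x {i}) → H.Adj y (flipB y {i}) →
      x = y ∨ x = flipB y {i}} with hS
  set T := {m : ℕ | ∃ x : Fin n → Bool,
    m = 1 + (Finset.univ.filter fun i : Fin n => f (flipB x {i}) ≠ f x).card} with hT
  have hTbdd : BddAbove T := by
    refine ⟨1 + n, ?_⟩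
    rintro m ⟨x, rfl⟩
    have := Finset.card_le_univ (Finset.univ.filter fun i : Fin n => f (flipB x {i}) ≠ f x)
    simp only [Finset.card_univ, Fintype.card_fin] at this
    omega
  have hone : (1 : ℕ) ≤ sStar f := by
    have h1 : (1 + (sensSet f (fun _ => false)).card) ∈ T := ⟨fun _ => false, rfl⟩
    have := le_csSup hTbdd h1
    rw [show sSup T = sStar f from rfl] at this
    omega
  have hub : ∀ m ∈ S, m ≤ sStar f := by
    rintro m ⟨H, rfl, htree, -⟩
    by_cases hex : ∃ c ∈ H.verts, f c = true
    · obtain ⟨c, hcv, hct⟩ := hex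
      have hstep : ∀ a b : H.verts, H.coe.Adj a b →
          (a.val = c ∨ ∃ i, f (flipB c {i}) ≠ f c ∧ a.val = flipB c {i}) →
          (b.val = c ∨ ∃ i, f (flipB c {i}) ≠ f c ∧ b.val = flipB c {i}) := by
        rintro ⟨a, ha⟩ ⟨b, hb⟩ hab hPa
        obtain ⟨hf, i, hbi⟩ := H.adj_sub hab
        simp only at hPa hf hbi ⊢
        rcases hPa with h1 | ⟨j, hj, h2⟩
        · subst h1
          exact Or.inr ⟨i, by rw [← hbi]; exact hf.symm, hbi⟩
        · have hfa : f a = false := by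
            have hne : f a ≠ f c := by rw [h2]; exact hj
            rw [hct] at hne
            simpa using hne
          have hcj : f (flipB a {j}) ≠ f a := by
            have he : flipB a {j} = c := by rw [h2, flipB_flipB]
            rw [he, hct, hfa]
            simp
          have hbi' : f (flipB a {i}) ≠ f a := by rw [← hbi]; exact hf.symm
          have hij : i = j := sens_unique f h a hfa hbi' hcj
          left
          rw [hbi, hij, h2, flipB_flipB]
      have hP : ∀ v ∈ H.verts, v = c ∨ ∃ i, f (flipB c {i}) ≠ f c ∧ v = flipB c {i} := by
        intro v hv
        obtain ⟨p⟩ := htree.isConnected.preconnected ⟨c, hcv⟩ ⟨v, hv⟩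
        exact walk_closure
          (fun a : H.verts => a.val = c ∨ ∃ i, f (flipB c {i}) ≠ f c ∧ a.val = flipB c {i})
          hstep p (Or.inl rfl)
      have hsub : H.verts ⊆ ↑(insert c ((sensSet f c).image fun i => flipB c {i})) := by
        intro v hv
        rcases hP v hv with rfl | ⟨i, hi, rfl⟩
        · simp
        · simp only [Finset.coe_insert, Set.mem_insert_iff, Finset.coe_image, Set.mem_image]
          exact Or.inr ⟨i, by simp [hi], rfl⟩
      calc H.verts.ncard
          ≤ (↑(insert c ((sensSet f c).image fun i => flipB c {i})) : Set (Fin n → Bool)).ncard :=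
            Set.ncard_le_ncard hsub (Finset.finite_toSet _)
        _ = (insert c ((sensSet f c).image fun i => flipB c {i})).card :=
            Set.ncard_coe_finset _
        _ ≤ ((sensSet f c).image fun i => flipB c {i}).card + 1 := Finset.card_insert_le _ _
        _ ≤ 1 + (sensSet f c).card := by
            have := Finset.card_image_le (s := sensSet f c) (f := fun i => flipB c {i})
            omega
        _ ≤ sStar f := le_csSup hTbdd ⟨c, rfl⟩
    · push_neg at hex
      have hss : H.verts.Subsingleton := by
        intro a ha b hb
        obtain ⟨p⟩ := htree.isConnected.preconnected ⟨a, ha⟩ ⟨b, hb⟩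
        cases p with
        | nil => rfl
        | cons hadj q =>
          exfalso
          have hf := (H.adj_sub hadj).1
          have h1 := hex _ (H.edge_vert hadj)
          have h2 := hex _ (H.edge_vert (H.adj_symm hadj))
          simp only [Bool.not_eq_true] at h1 h2
          rw [h1, h2] at hf
          exact hf rfl
      have : H.verts.ncard ≤ 1 := by
        rcases hss.eq_empty_or_singleton with he | ⟨a, he⟩
        · rw [he]; simp
        · rw [he]; simp
      omega
  have hmem : ∀ x : Fin n → Bool, (1 + (sensSet f x).card) ∈ S := by
    intro x
    exact ⟨starSub f x, (starSub_ncard f x).symm, starSub_isTree f x, starSub_dir f x⟩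
  have hSbdd : BddAbove S := ⟨sStar f, fun m hm => hub m hm⟩
  apply le_antisymm
  · exact csSup_le ⟨_, hmem (fun _ => false)⟩ hub
  · refine csSup_le ⟨1 + (sensSet f (fun _ => false)).card, fun _ => false, rfl⟩ ?_
    rintro m ⟨x, rfl⟩
    exact le_csSup hSbdd (hmem x)
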